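/- arXiv:math/0410264 — 2 statements merged into one kernel-verified Lean document; each statement's English description precedes it below -/
import Mathlib

section
/- Let L and G be lattices in Z^l with G ⊆ L, and let K be a field of characteristic 0. Then rad(I_L) = rad(I_G) if and only if L = G. -/
open MvPolynomial

/-- The binomial `t^{z₊} - t^{z₋}` associated to an integer vector `z`. -/
noncomputable def binom {n : ℕ} (K : Type*) [Field K] (u : Fin n → ℤ) :
    MvPolynomial (Fin n) K :=
  monomial (Finsupp.equivFunOnFinite.symm fun i => (u i).toNat) 1 -
    monomial (Finsupp.equivFunOnFinite.symm fun i => (-u i).toNat) 1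

/-- The lattice ideal of a lattice `L ⊆ ℤˡ`. -/
noncomputable def latticeIdeal (K : Type*) [Field K] {l : ℕ}
    (L : AddSubgroup (Fin l → ℤ)) : Ideal (MvPolynomial (Fin l) K) :=
  Ideal.span (binom K '' (L : Set (Fin l → ℤ)))

/-- Auxiliary: in char 0, if `single c 1 - 1` is nilpotent in a group algebra then `c = 0`. -/
lemma aux_single_sub_one_nilpotent {K : Type*} [Field K] [CharZero K]
    {Q : Type*} [AddCommGroup Q] {c : Q}
    (h : IsNilpotent ((AddMonoidAlgebra.single c 1 : AddMonoidAlgebra K Q) - 1)) : c = 0 := by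
  obtain ⟨n, hn⟩ := h
  set x : AddMonoidAlgebra K Q := AddMonoidAlgebra.single c 1 with hx
  by_cases hc : ∃ m : ℕ, 0 < m ∧ m • c = 0
  · obtain ⟨m, hm, hmc⟩ := hc
    have hxm : x ^ m = 1 := by
      rw [hx, AddMonoidAlgebra.single_pow, hmc, one_pow, AddMonoidAlgebra.one_def]
    have hgeom : (∑ i ∈ Finset.range m, x ^ i) * (x - 1) = 0 := by
      rw [geom_sum_mul, hxm, sub_self]
    have hdvd : (x - 1) ∣ (∑ i ∈ Finset.range m, x ^ i) - (m : AddMonoidAlgebra K Q) := by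
      have : (∑ i ∈ Finset.range m, x ^ i) - (m : AddMonoidAlgebra K Q)
          = ∑ i ∈ Finset.range m, (x ^ i - 1) := by
        rw [Finset.sum_sub_distrib]
        simp
      rw [this]
      refine Finset.dvd_sum fun i _ => ?_
      simpa using sub_dvd_pow_sub_pow x 1 i
    obtain ⟨t, ht⟩ := hdvd
    have hnil : IsNilpotent ((x - 1) * t) :=
      ⟨n, by rw [mul_pow, hn, zero_mul]⟩
    have hunit : IsUnit ((m : AddMonoidAlgebra K Q) + (x - 1) * t) := by
      refine hnil.isUnit_add_left_of_commute ?_ (Commute.all _ _)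
      have hm0 : (m : K) ≠ 0 := Nat.cast_ne_zero.mpr hm.ne'
      have := (isUnit_iff_ne_zero.mpr hm0).map (algebraMap K (AddMonoidAlgebra K Q))
      simpa using this
    have hS : (∑ i ∈ Finset.range m, x ^ i) = (m : AddMonoidAlgebra K Q) + (x - 1) * t := by
      linear_combination ht
    rw [hS] at hgeom
    have hx1 : x - 1 = 0 := by
      obtain ⟨v, hv⟩ := hunit
      have := congrArg (fun y => (↑v⁻¹ : AddMonoidAlgebra K Q) * y) hgeom
      simpa [← mul_assoc, ← hv, Units.inv_mul] using this
    have heq : (AddMonoidAlgebra.single c 1 : AddMonoidAlgebra K Q)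
        = AddMonoidAlgebra.single 0 1 := by
      rw [← AddMonoidAlgebra.one_def]; linear_combination hx1
    exact AddMonoidAlgebra.single_left_injective (one_ne_zero) heq
  · push_neg at hc
    exfalso
    have hinj : ∀ k₁ k₂ : ℕ, k₁ • c = k₂ • c → k₁ = k₂ := by
      intro k₁ k₂ he
      by_contra hne
      rcases lt_or_gt_of_ne hne with hlt | hlt
      · exact hc (k₂ - k₁) (by omega) (by
          rw [sub_nsmul _ hlt.le, ← he]; abel)
      · exact hc (k₁ - k₂) (by omega) (by
          rw [sub_nsmul _ hlt.le, he]; abel)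
    have hexp : (x - 1) ^ n = ∑ k ∈ Finset.range (n + 1),
        AddMonoidAlgebra.single (k • c) (((-1 : K) ^ (n - k)) * (n.choose k : K)) := by
      have hb := Commute.add_pow (Commute.all x (-1 : AddMonoidAlgebra K Q)) n
      rw [← sub_eq_add_neg] at hb
      rw [hb]
      refine Finset.sum_congr rfl fun k hk => ?_
      have h1 : x ^ k = AddMonoidAlgebra.single (k • c) (1 : K) := by
        rw [hx, AddMonoidAlgebra.single_pow, one_pow]
      have h2 : (-1 : AddMonoidAlgebra K Q) ^ (n - k)
          = AddMonoidAlgebra.single (0 : Q) ((-1 : K) ^ (n - k)) := by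
        rw [show (-1 : AddMonoidAlgebra K Q) = AddMonoidAlgebra.single (0 : Q) (-1 : K) by
          rw [AddMonoidAlgebra.one_def (R := K), ← AddMonoidAlgebra.single_neg],
          AddMonoidAlgebra.single_pow, smul_zero]
      have h3 : ((n.choose k : ℕ) : AddMonoidAlgebra K Q)
          = AddMonoidAlgebra.single (0 : Q) ((n.choose k : K)) := by
        rw [show ((n.choose k : ℕ) : AddMonoidAlgebra K Q)
          = algebraMap K _ ((n.choose k : K)) by push_cast; rfl]
        rfl
      rw [h1, h2, h3, AddMonoidAlgebra.single_mul_single, AddMonoidAlgebra.single_mul_single]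
      congr 1
      · abel
      · ring
    have h0 : (0 : K) = ((x - 1) ^ n).coeff (n • c) := by rw [hn]; rfl
    rw [hexp, AddMonoidAlgebra.coeff_sum, Finsupp.finset_sum_apply] at h0
    simp only [AddMonoidAlgebra.coeff_single] at h0
    rw [Finset.sum_eq_single n] at h0
    · rw [Finsupp.single_eq_same] at h0
      simp at h0
    · intro k hk hkn
      exact Finsupp.single_eq_of_ne' (fun he => hkn (hinj _ _ he))
    · intro hn'
      exact absurd (Finset.self_mem_range_succ n) hn'

/-- Cast of exponent vectors from `ℕ` to `ℤ`. -/
def expCast {l : ℕ} : (Fin l →₀ ℕ) →+ (Fin l → ℤ) where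
  toFun m := fun i => (m i : ℤ)
  map_zero' := by ext i; simp
  map_add' a b := by ext i; simp

/-- The ring hom from the polynomial ring to the group algebra of `ℤˡ/G`. -/
noncomputable def latmap (K : Type*) [Field K] {l : ℕ} (G : AddSubgroup (Fin l → ℤ)) :
    MvPolynomial (Fin l) K →+* AddMonoidAlgebra K ((Fin l → ℤ) ⧸ G) :=
  AddMonoidAlgebra.mapDomainRingHom K ((QuotientAddGroup.mk' G).comp expCast)

lemma latmap_monomial (K : Type*) [Field K] {l : ℕ} (G : AddSubgroup (Fin l → ℤ))
    (m : Fin l →₀ ℕ) :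
    latmap K G (monomial m (1 : K))
      = AddMonoidAlgebra.single ((QuotientAddGroup.mk' G) (expCast m)) 1 := by
  rw [← MvPolynomial.single_eq_monomial]
  show AddMonoidAlgebra.mapDomain _ (AddMonoidAlgebra.single m 1) = _
  rw [AddMonoidAlgebra.mapDomain_single]
  rfl

lemma latmap_binom (K : Type*) [Field K] {l : ℕ} (G : AddSubgroup (Fin l → ℤ))
    (u : Fin l → ℤ) :
    latmap K G (binom K u)
      = AddMonoidAlgebra.single ((QuotientAddGroup.mk' G) (fun i => ((u i).toNat : ℤ))) 1
        - AddMonoidAlgebra.single ((QuotientAddGroup.mk' G) (fun i => (((-u i)).toNat : ℤ))) 1 := by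
  rw [binom, map_sub, latmap_monomial, latmap_monomial]
  rfl

lemma pos_sub_neg {l : ℕ} (u : Fin l → ℤ) :
    (fun i => ((u i).toNat : ℤ)) - (fun i => (((-u i)).toNat : ℤ)) = u := by
  funext i
  simp [Int.toNat_sub_toNat_neg]

lemma latmap_binom_mem (K : Type*) [Field K] {l : ℕ} (G : AddSubgroup (Fin l → ℤ))
    {u : Fin l → ℤ} (hu : u ∈ G) : latmap K G (binom K u) = 0 := by
  rw [latmap_binom]
  have : (QuotientAddGroup.mk' G) (fun i => ((u i).toNat : ℤ))
      = (QuotientAddGroup.mk' G) (fun i => (((-u i)).toNat : ℤ)) := by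
    rw [QuotientAddGroup.mk'_apply, QuotientAddGroup.mk'_apply,
      QuotientAddGroup.eq_iff_sub_mem, pos_sub_neg]
    exact hu
  rw [this, sub_self]

lemma latticeIdeal_le_ker (K : Type*) [Field K] {l : ℕ} (G : AddSubgroup (Fin l → ℤ)) :
    latticeIdeal K G ≤ RingHom.ker (latmap K G) := by
  rw [latticeIdeal, Ideal.span_le]
  rintro _ ⟨u, hu, rfl⟩
  exact latmap_binom_mem K G hu

theorem stmt5 (K : Type*) [Field K] [CharZero K] {l : ℕ}
    (L G : AddSubgroup (Fin l → ℤ)) (hGL : G ≤ L) :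
    (latticeIdeal K L).radical = (latticeIdeal K G).radical ↔ L = G := by
  constructor
  · intro h
    refine le_antisymm (fun z hz => ?_) hGL
    have h1 : binom K z ∈ latticeIdeal K L := Ideal.subset_span ⟨z, hz, rfl⟩
    have h2 : binom K z ∈ (latticeIdeal K G).radical := by
      rw [← h]; exact Ideal.le_radical h1
    obtain ⟨n, hn⟩ := h2
    have h3 : (latmap K G (binom K z)) ^ n = 0 := by
      rw [← map_pow]
      exact latticeIdeal_le_ker K G hn
    rw [latmap_binom] at h3
    set a := (QuotientAddGroup.mk' G) (fun i => ((z i).toNat : ℤ)) with ha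
    set b := (QuotientAddGroup.mk' G) (fun i => (((-z i)).toNat : ℤ)) with hb
    have hab : AddMonoidAlgebra.single a (1 : K) - AddMonoidAlgebra.single b 1
        = AddMonoidAlgebra.single b 1 * (AddMonoidAlgebra.single (a - b) 1 - 1) := by
      rw [mul_sub, AddMonoidAlgebra.single_mul_single, mul_one, mul_one, add_sub_cancel]
    rw [hab, mul_pow] at h3
    have h5 : (AddMonoidAlgebra.single (a - b) (1 : K)
        - (1 : AddMonoidAlgebra K ((Fin l → ℤ) ⧸ G))) ^ n = 0 := by
      have h6 := congrArg
        (fun y => (AddMonoidAlgebra.single (-b) (1 : K)) ^ n * y) h3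
      simp only [← mul_assoc, ← mul_pow, AddMonoidAlgebra.single_mul_single,
        neg_add_cancel, one_mul, mul_zero, ← AddMonoidAlgebra.one_def, one_pow] at h6
      exact h6
    have h7 : a - b = 0 := aux_single_sub_one_nilpotent ⟨n, h5⟩
    have h8 : a - b = (QuotientAddGroup.mk' G) z := by
      rw [ha, hb, ← map_sub, pos_sub_neg]
    rw [h8, QuotientAddGroup.mk'_apply] at h7
    exact (QuotientAddGroup.eq_zero_iff z).mp h7
  · intro h
    subst h
    rfl
end

section
/- Let L and G be lattices in Z^l with G ⊆ L, and let K be a field of characteristic p > 0. Then rad(I_L) = rad(I_G) if and only if there exists k ∈ N with p^k L ⊆ G. -/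
open MvPolynomial

lemma mem_toIntSubmodule_iff {M : Type*} [AddCommGroup M] (S : AddSubgroup M) (x : M) :
    x ∈ AddSubgroup.toIntSubmodule S ↔ x ∈ S := Iff.rfl

lemma toNat_natCast_mul (N : ℕ) (x : ℤ) : ((N : ℤ) * x).toNat = N * x.toNat := by
  rcases le_or_gt 0 x with h | h
  · lift x to ℕ using h
    rw [← Nat.cast_mul, Int.toNat_natCast, Int.toNat_natCast]
  · rw [Int.toNat_of_nonpos h.le,
      Int.toNat_of_nonpos (mul_nonpos_of_nonneg_of_nonpos (Int.natCast_nonneg N) h.le), mul_zero]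

lemma binom_pow (K : Type*) [Field K] (p : ℕ) [Fact p.Prime] [CharP K p] {l : ℕ}
    (u : Fin l → ℤ) (k : ℕ) :
    binom K u ^ p ^ k = binom K ((p : ℤ) ^ k • u) := by
  have key : ∀ v : Fin l → ℤ,
      (Finsupp.equivFunOnFinite.symm fun i => (((p : ℤ)) ^ k * v i).toNat)
        = p ^ k • Finsupp.equivFunOnFinite.symm fun i => (v i).toNat := by
    intro v
    apply Finsupp.ext
    intro i
    have hc : ((p : ℤ)) ^ k = ((p ^ k : ℕ) : ℤ) := by push_cast; ring
    simp only [Finsupp.smul_apply, Finsupp.coe_equivFunOnFinite_symm, smul_eq_mul, hc,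
      toNat_natCast_mul]
  unfold binom
  rw [sub_pow_char_pow, monomial_pow, monomial_pow, one_pow]
  have h1 : ∀ i, (((p : ℤ) ^ k • u) i) = (p : ℤ) ^ k * u i := fun i => rfl
  have h2 : ∀ i, (-((p : ℤ) ^ k • u) i) = (p : ℤ) ^ k * (-u i) := by
    intro i; rw [h1]; ring
  simp only [h1, h2, neg_mul_eq_mul_neg, key]

lemma binom_mem_latticeIdeal_iff (K : Type*) [Field K] {l : ℕ}
    (G : AddSubgroup (Fin l → ℤ)) (v : Fin l → ℤ) :
    binom K v ∈ latticeIdeal K G ↔ v ∈ G := by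
  constructor
  · intro hv
    classical
    let x : Fin l → AddMonoidAlgebra K ((Fin l → ℤ) ⧸ G) := fun i =>
      AddMonoidAlgebra.single (QuotientAddGroup.mk (Pi.single i 1)) 1
    have haeval : ∀ m : Fin l →₀ ℕ,
        aeval x (monomial m (1 : K)) =
          AddMonoidAlgebra.single
            (QuotientAddGroup.mk (fun i => (m i : ℤ)) : (Fin l → ℤ) ⧸ G) 1 := by
      intro m
      induction m using Finsupp.induction with
      | zero =>
          have : (fun i : Fin l => ((0 : Fin l →₀ ℕ) i : ℤ)) = 0 := by funext i; simp
          rw [monomial_zero', map_one, this]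
          rw [QuotientAddGroup.mk_zero, map_one, AddMonoidAlgebra.one_def]
      | single_add a b f ha hb ih =>
          have hsplit : monomial (Finsupp.single a b + f) (1 : K)
              = monomial (Finsupp.single a b) 1 * monomial f 1 := by
            rw [monomial_mul, mul_one]
          rw [hsplit, map_mul, ih, ← X_pow_eq_monomial, map_pow, aeval_X]
          show (AddMonoidAlgebra.single (QuotientAddGroup.mk (Pi.single a 1)
              : (Fin l → ℤ) ⧸ G) (1 : K)) ^ b * _ = _
          rw [AddMonoidAlgebra.single_pow, one_pow, AddMonoidAlgebra.single_mul_single, one_mul]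
          congr 1
          have h1 : (b • (QuotientAddGroup.mk (Pi.single a 1) : (Fin l → ℤ) ⧸ G))
              = QuotientAddGroup.mk (b • Pi.single a (1 : ℤ)) := by
            exact ((QuotientAddGroup.mk' G).map_nsmul _ _).symm
          rw [h1, ← QuotientAddGroup.mk_add]
          congr 1
          funext i
          simp only [Pi.add_apply, Pi.smul_apply, Pi.single_apply, Finsupp.coe_add,
            Finsupp.single_apply, smul_eq_mul]
          split <;> simp <;> omega
    have hbin : ∀ w : Fin l → ℤ, aeval x (binom K w) =
        AddMonoidAlgebra.single
          (QuotientAddGroup.mk (fun i => ((w i).toNat : ℤ)) : (Fin l → ℤ) ⧸ G) 1 -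
        AddMonoidAlgebra.single
          (QuotientAddGroup.mk (fun i => ((-w i).toNat : ℤ)) : (Fin l → ℤ) ⧸ G) 1 := by
      intro w
      unfold binom
      rw [map_sub, haeval, haeval]
      rfl
    have hker : latticeIdeal K G ≤ RingHom.ker (aeval x).toRingHom := by
      rw [latticeIdeal, Ideal.span_le]
      rintro _ ⟨z, hz, rfl⟩
      simp only [SetLike.mem_coe, RingHom.mem_ker, AlgHom.toRingHom_eq_coe, RingHom.coe_coe]
      rw [hbin, sub_eq_zero]
      congr 1
      rw [QuotientAddGroup.eq]
      have heq : ((-fun i => ((z i).toNat : ℤ)) + fun i => ((-z i).toNat : ℤ)) = -z := by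
        funext i; simp only [Pi.add_apply, Pi.neg_apply]; omega
      rw [heq]
      exact neg_mem hz
    have h0 := hker hv
    simp only [RingHom.mem_ker, AlgHom.toRingHom_eq_coe, RingHom.coe_coe] at h0
    rw [hbin, sub_eq_zero, AddMonoidAlgebra.single_left_inj (one_ne_zero (α := K))] at h0
    rw [QuotientAddGroup.eq] at h0
    have heq : ((-fun i => ((v i).toNat : ℤ)) + fun i => ((-v i).toNat : ℤ)) = -v := by
      funext i; simp only [Pi.add_apply, Pi.neg_apply]; omega
    rw [heq] at h0
    simpa using neg_mem h0
  · intro hv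
    exact Ideal.subset_span ⟨v, hv, rfl⟩

theorem stmt6 (K : Type*) [Field K] (p : ℕ) (hp : p.Prime) [CharP K p] {l : ℕ}
    (L G : AddSubgroup (Fin l → ℤ)) (hGL : G ≤ L) :
    (latticeIdeal K L).radical = (latticeIdeal K G).radical ↔ ∃ k : ℕ, ∀ u ∈ L, (p : ℤ) ^ k • u ∈ G := by
  haveI := Fact.mk hp
  constructor
  · intro h
    have step1 : ∀ u ∈ L, ∃ k : ℕ, (p : ℤ) ^ k • u ∈ G := by
      intro u hu
      have h1 : binom K u ∈ (latticeIdeal K G).radical := by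
        rw [← h]
        exact Ideal.le_radical (Ideal.subset_span ⟨u, hu, rfl⟩)
      obtain ⟨n, hn⟩ := Ideal.mem_radical_iff.mp h1
      refine ⟨n, ?_⟩
      rw [← binom_mem_latticeIdeal_iff K G, ← binom_pow K p u n]
      have hle : n ≤ p ^ n := (Nat.lt_pow_self (n := n) hp.one_lt).le
      have hsplit : binom K u ^ p ^ n = binom K u ^ n * binom K u ^ (p ^ n - n) := by
        rw [← pow_add, Nat.add_sub_cancel' hle]
      rw [hsplit]
      exact Ideal.mul_mem_right _ _ hn
    choose! k hk using step1
    obtain ⟨S, hS⟩ := IsNoetherian.noetherian (AddSubgroup.toIntSubmodule L)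
    refine ⟨S.sup k, ?_⟩
    intro u hu
    set N := S.sup k with hN
    have hmap : (S : Set (Fin l → ℤ)) ⊆ (Submodule.comap
        (LinearMap.lsmul ℤ (Fin l → ℤ) ((p : ℤ) ^ N)) (AddSubgroup.toIntSubmodule G) :
          Set (Fin l → ℤ)) := by
      intro s hs
      have hsL : s ∈ L := by
        rw [← mem_toIntSubmodule_iff, ← hS]
        exact Submodule.subset_span hs
      have hks : (p : ℤ) ^ (k s) • s ∈ G := hk s hsL
      have hle : k s ≤ N := Finset.le_sup hs
      simp only [SetLike.mem_coe, Submodule.mem_comap, LinearMap.lsmul_apply,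
        mem_toIntSubmodule_iff]
      have hpow : (p : ℤ) ^ N = (p : ℤ) ^ (N - k s) * (p : ℤ) ^ (k s) := by
        rw [← pow_add, Nat.sub_add_cancel hle]
      rw [hpow, mul_smul]
      exact AddSubgroup.zsmul_mem G hks _
    have hspan := Submodule.span_le.mpr hmap
    have humem : u ∈ Submodule.span ℤ (S : Set (Fin l → ℤ)) := by
      rw [hS, mem_toIntSubmodule_iff]; exact hu
    have := hspan humem
    simpa only [Submodule.mem_comap, LinearMap.lsmul_apply,
      mem_toIntSubmodule_iff] using this
  · rintro ⟨k, hkk⟩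
    apply le_antisymm
    · have hle : latticeIdeal K L ≤ (latticeIdeal K G).radical := by
        rw [latticeIdeal, Ideal.span_le]
        rintro _ ⟨u, hu, rfl⟩
        exact ⟨p ^ k, by rw [binom_pow]; exact Ideal.subset_span ⟨_, hkk u hu, rfl⟩⟩
      calc (latticeIdeal K L).radical
          ≤ ((latticeIdeal K G).radical).radical := Ideal.radical_mono hle
        _ = _ := Ideal.radical_idem _
    · exact Ideal.radical_mono (Ideal.span_mono (Set.image_mono hGL))
end
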